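/- Let τ ∈ ℝ with τ ≠ 0, γ ∈ ℝ, A := !![1, τ; 0, 1], β := ![τ²/2, τ] (2×1), B := ![τ, 1] (2×1), F := !![γ/τ, 1] (1×2) and D := τ/2. Then: (i) A − B·F = !![1−γ, 0; −γ/τ, 0]; (ii) β − D·B = ![0, τ/2]; and (iii) for every N ≥ 2, M ≥ 1, every matrix VJ ∈ Matrix (Fin (N−1)) (Fin M) ℝ and all vectors ξᵖ, ξᶠ, eᵖ, eᶠ ∈ ℝ^{N−1}, ν, e_ν ∈ ℝᴹ, the first N−1 components of ((A−BF)⊗I_{N−1})·[ξᵖ; ξᶠ] + ((β−DB)⊗VJ)·ν + ((BF)⊗I_{N−1})·[eᵖ; eᶠ] + ((DB)⊗VJ)·e_ν equal (1−γ)ξᵖ + γeᵖ + τeᶠ + (τ²/2)·VJ·e_ν. -/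

import Mathlib

open Matrix Kronecker

/-- Theorem 2 of the paper (closed-loop identities for the feedback gains
`F = [γ/τ, 1]`, `D = τ/2`): `A − BF`, `β − DB`, and the resulting dynamics of the phase
block of the observable synchronization error. -/
theorem stmt_18 (τ : ℝ) (hτ : τ ≠ 0) (γ : ℝ)
    (A : Matrix (Fin 2) (Fin 2) ℝ) (hA : A = !![1, τ; 0, 1])
    (β : Matrix (Fin 2) (Fin 1) ℝ) (hβ : β = !![τ^2/2; τ])
    (B : Matrix (Fin 2) (Fin 1) ℝ) (hB : B = !![τ; 1])
    (F : Matrix (Fin 1) (Fin 2) ℝ) (hF : F = !![γ/τ, 1])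
    (D : ℝ) (hD : D = τ/2) :
    A - B * F = !![1 - γ, 0; -(γ/τ), 0] ∧
    β - D • B = !![0; τ/2] ∧
    (∀ (N M : ℕ), 2 ≤ N → 1 ≤ M →
      ∀ (VJ : Matrix (Fin (N-1)) (Fin M) ℝ) (ξp ξf ep ef : Fin (N-1) → ℝ)
        (ν eν : Fin M → ℝ),
      (fun j : Fin (N-1) =>
        (((A - B * F) ⊗ₖ (1 : Matrix (Fin (N-1)) (Fin (N-1)) ℝ)) *ᵥ
            (fun pr => ![ξp, ξf] pr.1 pr.2)
          + (((β - D • B) ⊗ₖ VJ).submatrix id (fun jm : Fin M => ((0 : Fin 1), jm))) *ᵥ ν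
          + ((B * F) ⊗ₖ (1 : Matrix (Fin (N-1)) (Fin (N-1)) ℝ)) *ᵥ
            (fun pr => ![ep, ef] pr.1 pr.2)
          + (((D • B) ⊗ₖ VJ).submatrix id (fun jm : Fin M => ((0 : Fin 1), jm))) *ᵥ eν)
        ((0 : Fin 2), j))
      = (1 - γ) • ξp + γ • ep + τ • ef + (τ^2/2) • (VJ *ᵥ eν)) := by
  subst hA hβ hB hF hD
  have h1 : !![(1:ℝ), τ; 0, 1] - !![τ; 1] * !![γ/τ, 1] = !![1 - γ, 0; -(γ/τ), 0] := by
    ext i j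
    fin_cases i <;> fin_cases j <;>
      simp [Matrix.mul_apply, Fin.sum_univ_succ] <;> field_simp
  have h2 : !![τ^2/2; (τ:ℝ)] - (τ/2) • !![τ; 1] = !![0; τ/2] := by
    ext i j
    fin_cases i <;> fin_cases j <;> simp <;> ring
  refine ⟨h1, h2, ?_⟩
  intro N M hN hM VJ ξp ξf ep ef ν eν
  rw [h1, h2]
  funext j
  simp only [Matrix.mulVec, dotProduct, Matrix.submatrix_apply, id_eq,
    Fintype.sum_prod_type, Fin.sum_univ_two, Matrix.kroneckerMap_apply,
    Matrix.one_apply, Pi.add_apply, Pi.smul_apply, smul_eq_mul]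
  simp [Matrix.mul_apply, Fin.sum_univ_succ, Matrix.one_apply, mul_ite,
    Finset.sum_ite_eq', Finset.mul_sum, Matrix.mulVec, dotProduct]
  field_simp
  ring
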